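/- Expected smoothness of the Jacobian for minibatch sketches. Let f_1,…,f_n : ℝ^d → ℝ be differentiable, f := (1/n)∑_i f_i, and let x* ∈ ℝ^d satisfy ∑_i ∇f_i(x*) = 0. Let G be a finite collection of nonempty subsets of [n] and p_C > 0 for C ∈ G with ∑_{C∈G} p_C = 1, and set p_i := ∑_{C∈G : i∈C} p_C. Let w_i > 0 and L_i > 0 for each i, and assume for every i and every x: ‖∇f_i(x) − ∇f_i(x*)‖² ≤ 2L_i (f_i(x) − f_i(x*) − ⟨∇f_i(x*), x − x*⟩). Then for all x ∈ ℝ^d: ∑_{C∈G} p_C ∑_{i∈C} (1/w_i) ‖∇f_i(x) − ∇f_i(x*)‖² ≤ 2L₂ (f(x) − f(x*)), where L₂ := n · max_{i∈[n]} (p_i L_i / w_i). (The left-hand side equals the expected weighted Frobenius norm E‖(∇F(x) − ∇F(x*)) Π_{I_S}‖²_{W⁻¹} for the minibatch sketch with W = diag(w_1,…,w_n).) -/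

import Mathlib

/-- The (Euclidean) gradient of `f : ℝ^d → ℝ` at `x`. -/
noncomputable def grad {d : ℕ} (f : (Fin d → ℝ) → ℝ) (x : Fin d → ℝ) : Fin d → ℝ :=
  fun k => fderiv ℝ f x (Pi.single k 1)

/-- Squared Euclidean norm. -/
def sq2 {d : ℕ} (v : Fin d → ℝ) : ℝ := ∑ k, (v k) ^ 2

/-- Euclidean inner product. -/
def inner2 {d : ℕ} (v w : Fin d → ℝ) : ℝ := ∑ k, v k * w k

/-- Expected smoothness of the Jacobian for minibatch sketches with
`W = diag(w₁,…,wₙ)`: `∑_{C∈G} p_C ∑_{i∈C} (1/wᵢ)‖∇fᵢ(x) − ∇fᵢ(x*)‖²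
≤ 2L₂(f(x) − f(x*))` with `L₂ = n·maxᵢ (pᵢ Lᵢ / wᵢ)`. -/
theorem expected_smoothness_jacobian_minibatch
    {d n : ℕ} (hn : 0 < n)
    (f : Fin n → (Fin d → ℝ) → ℝ) (hdiff : ∀ i, Differentiable ℝ (f i))
    (fbar : (Fin d → ℝ) → ℝ) (hfbar : ∀ x, fbar x = (1 / (n : ℝ)) * ∑ i, f i x)
    (xs : Fin d → ℝ) (hcrit : ∑ i, grad (f i) xs = 0)
    (G : Finset (Finset (Fin n))) (hGne : ∀ C ∈ G, C.Nonempty)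
    (p : Finset (Fin n) → ℝ) (hp : ∀ C ∈ G, 0 < p C) (hp1 : ∑ C ∈ G, p C = 1)
    (w L : Fin n → ℝ) (hw : ∀ i, 0 < w i) (hL : ∀ i, 0 < L i)
    (hsm : ∀ (i : Fin n) (x : Fin d → ℝ),
      sq2 (grad (f i) x - grad (f i) xs)
        ≤ 2 * L i * (f i x - f i xs - inner2 (grad (f i) xs) (x - xs)))
    (L₂ : ℝ)
    (hL₂ : L₂ = (n : ℝ) *
        (⨆ i : Fin n, (∑ C ∈ G.filter (fun C => i ∈ C), p C) * L i / w i)) :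
    ∀ x : Fin d → ℝ,
      ∑ C ∈ G, p C * ∑ i ∈ C, (1 / w i) * sq2 (grad (f i) x - grad (f i) xs)
        ≤ 2 * L₂ * (fbar x - fbar xs) := by
  intro x
  haveI : Nonempty (Fin n) := ⟨⟨0, hn⟩⟩
  set q : Fin n → ℝ := fun i => ∑ C ∈ G.filter (fun C => i ∈ C), p C with hq
  set D : Fin n → ℝ := fun i =>
    f i x - f i xs - inner2 (grad (f i) xs) (x - xs) with hDdef
  set M : ℝ := ⨆ i : Fin n, q i * L i / w i with hM
  have hq0 : ∀ i, 0 ≤ q i := fun i =>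
    Finset.sum_nonneg fun C hC => (hp C (Finset.mem_filter.mp hC).1).le
  have hsq0 : ∀ i, 0 ≤ sq2 (grad (f i) x - grad (f i) xs) := fun i =>
    Finset.sum_nonneg fun k _ => sq_nonneg _
  have hD0 : ∀ i, 0 ≤ D i := by
    intro i
    have h1 : (0:ℝ) ≤ 2 * L i * D i := le_trans (hsq0 i) (hsm i x)
    nlinarith [hL i]
  have hMle : ∀ i, q i * L i / w i ≤ M := fun i =>
    le_ciSup (f := fun j => q j * L j / w j) (Set.Finite.bddAbove (Set.finite_range _)) i
  -- swap the double sum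
  have swap : ∀ g : Fin n → ℝ,
      ∑ C ∈ G, p C * ∑ i ∈ C, g i = ∑ i, q i * g i := by
    intro g
    calc ∑ C ∈ G, p C * ∑ i ∈ C, g i
        = ∑ C ∈ G, ∑ i : Fin n, (if i ∈ C then p C * g i else 0) := by
          refine Finset.sum_congr rfl fun C _ => ?_
          rw [Finset.mul_sum, Finset.sum_ite_mem, Finset.univ_inter]
      _ = ∑ i : Fin n, ∑ C ∈ G, (if i ∈ C then p C * g i else 0) := Finset.sum_comm
      _ = ∑ i : Fin n, q i * g i := by
          refine Finset.sum_congr rfl fun i _ => ?_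
          rw [← Finset.sum_filter]
          exact (Finset.sum_mul _ _ _).symm
  rw [swap]
  -- termwise bound
  have hterm : ∀ i, q i * ((1 / w i) * sq2 (grad (f i) x - grad (f i) xs))
      ≤ 2 * M * D i := by
    intro i
    have h1 : q i * ((1 / w i) * sq2 (grad (f i) x - grad (f i) xs))
        ≤ q i * ((1 / w i) * (2 * L i * D i)) := by
      apply mul_le_mul_of_nonneg_left _ (hq0 i)
      exact mul_le_mul_of_nonneg_left (hsm i x) (by have := hw i; positivity)
    have h2 : q i * ((1 / w i) * (2 * L i * D i))
        = 2 * (q i * L i / w i) * D i := by ring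
    have h3 : 2 * (q i * L i / w i) * D i ≤ 2 * M * D i :=
      mul_le_mul_of_nonneg_right (by linarith [hMle i]) (hD0 i)
    linarith
  have hsum : ∑ i, q i * ((1 / w i) * sq2 (grad (f i) x - grad (f i) xs))
      ≤ ∑ i, 2 * M * D i := Finset.sum_le_sum fun i _ => hterm i
  -- compute ∑ D i
  have hinner : ∑ i, inner2 (grad (f i) xs) (x - xs) = 0 := by
    simp only [inner2]
    rw [Finset.sum_comm]
    have hk : ∀ k, ∑ i, grad (f i) xs k = 0 := fun k => by
      have := congrFun hcrit k
      simpa [Finset.sum_apply] using this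
    simp_rw [← Finset.sum_mul, hk, zero_mul, Finset.sum_const_zero]
  have hn' : (n : ℝ) ≠ 0 := Nat.cast_ne_zero.mpr hn.ne'
  have hDsum : ∑ i, D i = (n : ℝ) * (fbar x - fbar xs) := by
    simp only [hDdef, Finset.sum_sub_distrib, hinner, hfbar]
    field_simp
    ring
  have hfin : ∑ i, 2 * M * D i = 2 * L₂ * (fbar x - fbar xs) := by
    rw [← Finset.mul_sum, hDsum, hL₂]; ring
  linarith [hsum, hfin.le]
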